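/- For any ground program P, the operator T_P has a least fixed point, this least fixed point is a model of P, and it is less than or equal to every model of P in the pointwise order; that is, the least fixed point of T_P is the least model of P. -/

import Mathlib

namespace FLLP

def CL {n : ℕ} (x y : Fin (n+1)) : Fin (n+1) :=
  ⟨x.val + y.val - n, by have := x.isLt; have := y.isLt; omega⟩

def RL {n : ℕ} (j i : Fin (n+1)) : Fin (n+1) :=
  if h : i ≤ j then ⟨n, n.lt_succ_self⟩
  else ⟨n + j.val - i.val, by
    have h' : j.val < i.val := Fin.lt_def.mp (lt_of_not_ge h)
    have := i.isLt; omega⟩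

def RG {n : ℕ} (j i : Fin (n+1)) : Fin (n+1) :=
  if i ≤ j then ⟨n, n.lt_succ_self⟩ else j

inductive Body (A H : Type) : Type where
  | atom : A → Body A H
  | andG : Body A H → Body A H → Body A H
  | andL : Body A H → Body A H → Body A H
  | or   : Body A H → Body A H → Body A H
  | hedge : H → Body A H → Body A H
  deriving DecidableEq

def eval {n : ℕ} {A H : Type} (hinv : H → Fin (n+1) → Fin (n+1))
    (f : A → Fin (n+1)) : Body A H → Fin (n+1)
  | .atom a => f a
  | .andG B₁ B₂ => min (eval hinv f B₁) (eval hinv f B₂)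
  | .andL B₁ B₂ => CL (eval hinv f B₁) (eval hinv f B₂)
  | .or B₁ B₂ => max (eval hinv f B₁) (eval hinv f B₂)
  | .hedge h B => hinv h (eval hinv f B)

inductive Imp : Type where
  | luka : Imp
  | godel : Imp
  deriving DecidableEq

def tnorm {n : ℕ} : Imp → Fin (n+1) → Fin (n+1) → Fin (n+1)
  | .luka => CL
  | .godel => min

def implicator {n : ℕ} : Imp → Fin (n+1) → Fin (n+1) → Fin (n+1)
  | .luka => RL
  | .godel => RG

structure Program (n : ℕ) (A H : Type) [DecidableEq A] [DecidableEq H] : Type where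
  rules : Finset (A × Body A H × Fin (n+1) × Imp)
  facts : Finset (A × Fin (n+1))

noncomputable def TP {n : ℕ} {A H : Type} [DecidableEq A] [DecidableEq H]
    (P : Program n A H) (hinv : H → Fin (n+1) → Fin (n+1))
    (f : A → Fin (n+1)) : A → Fin (n+1) := fun a =>
  max ((P.rules.filter (fun R => R.1 = a)).sup
        (fun R => tnorm R.2.2.2 (eval hinv f R.2.1) R.2.2.1))
      ((P.facts.filter (fun F => F.1 = a)).sup (fun F => F.2))

def isModel {n : ℕ} {A H : Type} [DecidableEq A] [DecidableEq H]
    (P : Program n A H) (hinv : H → Fin (n+1) → Fin (n+1))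
    (f : A → Fin (n+1)) : Prop :=
  (∀ R ∈ P.rules, R.2.2.1 ≤ implicator R.2.2.2 (f R.1) (eval hinv f R.2.1)) ∧
  (∀ F ∈ P.facts, F.2 ≤ f F.1)



lemma resid {n : ℕ} (imp : Imp) (b r h : Fin (n+1)) :
    tnorm imp b r ≤ h ↔ r ≤ implicator imp h b := by
  cases imp
  · simp only [tnorm, implicator, CL, RL]
    split_ifs with hc
    · constructor
      · intro _; exact Fin.mk_le_of_le_val (Nat.le_of_lt_succ r.isLt)
      · intro _
        have := r.isLt
        exact Fin.mk_le_of_le_val (by have := Fin.le_def.mp hc; omega)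
    · have hc' : h.val < b.val := by
        have := Fin.lt_def.mp (lt_of_not_ge hc); omega
      constructor
      · intro hle
        have := Fin.le_def.mp hle
        exact Fin.mk_le_of_le_val (by simp at this ⊢; omega)
      · intro hle
        have := Fin.le_def.mp hle
        exact Fin.mk_le_of_le_val (by simp at this ⊢; omega)
  · simp only [tnorm, implicator, RG]
    split_ifs with hc
    · constructor
      · intro _; exact Fin.mk_le_of_le_val (Nat.le_of_lt_succ r.isLt)
      · intro _; exact le_trans (min_le_left _ _) hc
    · rw [min_le_iff]
      constructor
      · intro hle; rcases hle with hle | hle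
        · exact absurd hle hc
        · exact hle
      · exact Or.inr

lemma CL_mono {n : ℕ} {x x' y y' : Fin (n+1)} (hx : x ≤ x') (hy : y ≤ y') :
    CL x y ≤ CL x' y' := by
  have := Fin.le_def.mp hx; have := Fin.le_def.mp hy
  exact Fin.mk_le_of_le_val (by simp [CL]; omega)

lemma tnorm_mono_left {n : ℕ} (imp : Imp) {b b' : Fin (n+1)} (h : b ≤ b')
    (r : Fin (n+1)) : tnorm imp b r ≤ tnorm imp b' r := by
  cases imp
  · exact CL_mono h le_rfl
  · exact min_le_min h le_rfl

lemma eval_mono {n : ℕ} {A H : Type} (hinv : H → Fin (n+1) → Fin (n+1))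
    (hmono : ∀ h, Monotone (hinv h)) (B : Body A H) :
    Monotone (fun f : A → Fin (n+1) => eval hinv f B) := by
  induction B with
  | atom a => intro f g hfg; exact hfg a
  | andG B₁ B₂ ih₁ ih₂ => intro f g hfg; exact min_le_min (ih₁ hfg) (ih₂ hfg)
  | andL B₁ B₂ ih₁ ih₂ => intro f g hfg; exact CL_mono (ih₁ hfg) (ih₂ hfg)
  | or B₁ B₂ ih₁ ih₂ => intro f g hfg; exact max_le_max (ih₁ hfg) (ih₂ hfg)
  | hedge h B ih => intro f g hfg; exact hmono h (ih hfg)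

lemma TP_mono {n : ℕ} {A H : Type} [DecidableEq A] [DecidableEq H]
    (P : Program n A H) (hinv : H → Fin (n+1) → Fin (n+1))
    (hmono : ∀ h, Monotone (hinv h)) : Monotone (TP P hinv) := by
  intro f g hfg a
  apply max_le_max _ le_rfl
  apply Finset.sup_mono_fun
  intro R _
  exact tnorm_mono_left _ (eval_mono hinv hmono _ hfg) _

lemma prefix_iff_model {n : ℕ} {A H : Type} [DecidableEq A] [DecidableEq H]
    (P : Program n A H) (hinv : H → Fin (n+1) → Fin (n+1))
    (f : A → Fin (n+1)) : TP P hinv f ≤ f ↔ isModel P hinv f := by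
  constructor
  · intro hpre
    constructor
    · intro R hR
      rw [← resid]
      refine le_trans ?_ (hpre R.1)
      show _ ≤ max ((P.rules.filter (fun R' => R'.1 = R.1)).sup
          (fun R' => tnorm R'.2.2.2 (eval hinv f R'.2.1) R'.2.2.1))
        ((P.facts.filter (fun F => F.1 = R.1)).sup (fun F => F.2))
      refine le_trans ?_ (le_max_left _ _)
      have hm : R ∈ P.rules.filter (fun R' => R'.1 = R.1) :=
        Finset.mem_filter.mpr ⟨hR, rfl⟩
      exact Finset.le_sup (f := fun R' => tnorm R'.2.2.2 (eval hinv f R'.2.1) R'.2.2.1) hm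
    · intro F hF
      refine le_trans ?_ (hpre F.1)
      show _ ≤ max ((P.rules.filter (fun R' => R'.1 = F.1)).sup
          (fun R' => tnorm R'.2.2.2 (eval hinv f R'.2.1) R'.2.2.1))
        ((P.facts.filter (fun F' => F'.1 = F.1)).sup (fun F' => F'.2))
      refine le_trans ?_ (le_max_right _ _)
      have hm : F ∈ P.facts.filter (fun F' => F'.1 = F.1) :=
        Finset.mem_filter.mpr ⟨hF, rfl⟩
      exact Finset.le_sup hm
  · intro ⟨hrules, hfacts⟩ a
    show max _ _ ≤ f a
    apply max_le
    · apply Finset.sup_le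
      intro R hR
      rw [Finset.mem_filter] at hR
      rw [← hR.2]
      exact (resid _ _ _ _).mpr (hrules R hR.1)
    · apply Finset.sup_le
      intro F hF
      rw [Finset.mem_filter] at hF
      rw [← hF.2]
      exact hfacts F hF.1

theorem TP_least_fixed_point (n : ℕ) (hn : 1 ≤ n) (A H : Type) [Fintype A] [Fintype H]
    [DecidableEq A] [DecidableEq H]
    (hinv : H → Fin (n+1) → Fin (n+1)) (hmono : ∀ h, Monotone (hinv h))
    (P : Program n A H) :
    ∃ g : A → Fin (n+1),
      TP P hinv g = g ∧
      (∀ f : A → Fin (n+1), TP P hinv f = f → ∀ a, g a ≤ f a) ∧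
      isModel P hinv g ∧
      (∀ f : A → Fin (n+1), isModel P hinv f → ∀ a, g a ≤ f a) := by
  let T : (A → Fin (n+1)) →o (A → Fin (n+1)) := ⟨TP P hinv, TP_mono P hinv hmono⟩
  refine ⟨OrderHom.lfp T, T.map_lfp, ?_, ?_, ?_⟩
  · intro f hf a
    exact OrderHom.lfp_le T (le_of_eq hf) a
  · exact (prefix_iff_model P hinv _).mp (le_of_eq T.map_lfp)
  · intro f hf a
    exact OrderHom.lfp_le T ((prefix_iff_model P hinv f).mpr hf) a

end FLLP
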